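/- Let n ≥ 4 be an integer. If G is a graph on n vertices in which every vertex has triangle-degree at least C(n−2, 2), then e(G) ≥ C(n,2) − 1. -/

import Mathlib

/-- The triangle-degree of `v`: the number of triangles of `G` containing `v`. -/
def triangleDeg {V : Type*} [Fintype V] [DecidableEq V]
    (G : SimpleGraph V) [DecidableRel G.Adj] (v : V) : ℕ :=
  ((G.cliqueFinset 3).filter (fun s => v ∈ s)).card

open Finset

lemma tri_le_pairs {V : Type} [Fintype V] [DecidableEq V]
    (G : SimpleGraph V) [DecidableRel G.Adj] (v : V) :
    triangleDeg G v ≤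
      (((G.neighborFinset v).powersetCard 2).filter (fun p => p ∈ G.cliqueFinset 2)).card := by
  apply Finset.card_le_card_of_injOn (fun s => s.erase v)
  · intro s hs
    simp only [mem_coe, mem_filter, SimpleGraph.mem_cliqueFinset_iff] at hs ⊢
    obtain ⟨⟨hcl, hcard⟩, hv⟩ := hs
    have hsub : s.erase v ⊆ G.neighborFinset v := by
      intro x hx
      rw [Finset.mem_erase] at hx
      rw [SimpleGraph.mem_neighborFinset]
      exact (hcl (by exact_mod_cast hv) (by exact_mod_cast hx.2) (Ne.symm hx.1)).symm.symm
        |>.symm |>.symm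
    refine ⟨Finset.mem_powersetCard.2 ⟨hsub, ?_⟩, ?_⟩
    · rw [Finset.card_erase_of_mem hv, hcard]
    · refine ⟨hcl.subset ?_, ?_⟩
      · exact_mod_cast Finset.erase_subset v s
      · rw [Finset.card_erase_of_mem hv, hcard]
  · intro s hs t ht hst
    simp only [mem_coe, mem_filter] at hs ht
    rw [← Finset.insert_erase hs.2, ← Finset.insert_erase ht.2]
    exact congrArg (insert v) hst

/-- If `v` has two distinct non-neighbors, its triangle degree is at most `C(n-3,2)`. -/
lemma key1 {V : Type} [Fintype V] [DecidableEq V]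
    (G : SimpleGraph V) [DecidableRel G.Adj] (v x y : V)
    (hx : x ≠ v) (hy : y ≠ v) (hxy : x ≠ y)
    (h1 : ¬ G.Adj v x) (h2 : ¬ G.Adj v y) :
    triangleDeg G v ≤ Nat.choose (Fintype.card V - 3) 2 := by
  refine (tri_le_pairs G v).trans ?_
  calc (((G.neighborFinset v).powersetCard 2).filter (fun p => p ∈ G.cliqueFinset 2)).card
      ≤ ((G.neighborFinset v).powersetCard 2).card := Finset.card_filter_le _ _
    _ = Nat.choose (G.neighborFinset v).card 2 := Finset.card_powersetCard 2 _
    _ ≤ Nat.choose (Fintype.card V - 3) 2 := by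
        apply Nat.choose_le_choose
        have hsub : G.neighborFinset v ⊆ (Finset.univ \ {v, x, y}) := by
          intro z hz
          rw [SimpleGraph.mem_neighborFinset] at hz
          simp only [Finset.mem_sdiff, Finset.mem_univ, true_and, Finset.mem_insert,
            Finset.mem_singleton]
          push_neg
          refine ⟨fun h => G.loopless.irrefl v (h ▸ hz), fun h => h1 (h ▸ hz), fun h => h2 (h ▸ hz)⟩
        have := Finset.card_le_card hsub
        have hc : ({v, x, y} : Finset V).card = 3 := by
          rw [Finset.card_insert_of_notMem (by simp [hx.symm, hy.symm]),
            Finset.card_insert_of_notMem (by simp [hxy]), Finset.card_singleton]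
        rw [Finset.card_sdiff_of_subset (by simp), Finset.card_univ, hc] at this
        exact this

/-- Case where `v` has a non-neighbor `x` and there is a non-edge `cd` inside `N(v)`. -/
lemma key2 {V : Type} [Fintype V] [DecidableEq V]
    (G : SimpleGraph V) [DecidableRel G.Adj] (v x c d : V)
    (hx : x ≠ v) (h1 : ¬ G.Adj v x)
    (hcd : c ≠ d) (hvc : G.Adj v c) (hvd : G.Adj v d) (hncd : ¬ G.Adj c d) :
    triangleDeg G v ≤ Nat.choose (Fintype.card V - 2) 2 - 1 := by
  refine (tri_le_pairs G v).trans ?_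
  set P := (G.neighborFinset v).powersetCard 2 with hP
  have hmem : ({c, d} : Finset V) ∈ P := by
    rw [hP, Finset.mem_powersetCard]
    constructor
    · intro z hz
      simp only [Finset.mem_insert, Finset.mem_singleton] at hz
      rcases hz with rfl | rfl
      · exact (SimpleGraph.mem_neighborFinset G v z).2 hvc
      · exact (SimpleGraph.mem_neighborFinset G v z).2 hvd
    · rw [Finset.card_insert_of_notMem (by simp [hcd]), Finset.card_singleton]
  have hsub : P.filter (fun p => p ∈ G.cliqueFinset 2) ⊆ P.erase {c, d} := by
    intro p hp
    rw [Finset.mem_filter] at hp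
    rw [Finset.mem_erase]
    refine ⟨?_, hp.1⟩
    intro h
    subst h
    rw [SimpleGraph.mem_cliqueFinset_iff] at hp
    have := hp.2.1 (Finset.mem_coe.2 (Finset.mem_insert_self c {d}))
      (Finset.mem_coe.2 (by simp)) hcd
    exact hncd this
  refine (Finset.card_le_card hsub).trans ?_
  rw [Finset.card_erase_of_mem hmem]
  have hcP : P.card ≤ Nat.choose (Fintype.card V - 2) 2 := by
    rw [hP, Finset.card_powersetCard]
    apply Nat.choose_le_choose
    have hsub2 : G.neighborFinset v ⊆ (Finset.univ \ {v, x}) := by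
      intro z hz
      rw [SimpleGraph.mem_neighborFinset] at hz
      simp only [Finset.mem_sdiff, Finset.mem_univ, true_and, Finset.mem_insert,
        Finset.mem_singleton]
      push_neg
      exact ⟨fun h => G.loopless.irrefl v (h ▸ hz), fun h => h1 (h ▸ hz)⟩
    have := Finset.card_le_card hsub2
    have hc : ({v, x} : Finset V).card = 2 := by
      rw [Finset.card_insert_of_notMem (by simp [hx.symm]), Finset.card_singleton]
    rw [Finset.card_sdiff_of_subset (by simp), Finset.card_univ, hc] at this
    exact this
  omega

/-- The case `t = n - 2`: if every vertex of an `n`-vertex graph `G` (`n ≥ 4`)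
lies in at least `C(n-2,2)` triangles, then `e(G) ≥ C(n,2) - 1`. -/
theorem edges_case_t_eq_n_sub_two (n : ℕ) (hn : 4 ≤ n)
    (V : Type) [Fintype V] [DecidableEq V] (hV : Fintype.card V = n)
    (G : SimpleGraph V) [DecidableRel G.Adj]
    (hdeg : ∀ v : V, Nat.choose (n - 2) 2 ≤ triangleDeg G v) :
    Nat.choose n 2 - 1 ≤ G.edgeFinset.card := by
  classical
  have hchoose_lt : Nat.choose (n - 3) 2 < Nat.choose (n - 2) 2 := by
    have h : n - 2 = (n - 3) + 1 := by omega
    have h2 := Nat.choose_succ_succ (n - 3) 1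
    rw [Nat.choose_one_right] at h2
    norm_num at h2
    rw [h]
    omega
  have hchoose_pos : 1 ≤ Nat.choose (n - 2) 2 := by
    calc 1 = Nat.choose 2 2 := by norm_num
      _ ≤ Nat.choose (n - 2) 2 := Nat.choose_le_choose 2 (by omega)
  -- e(G) + e(Gᶜ) = C(n,2)
  have hU : G.edgeFinset ∪ Gᶜ.edgeFinset = (⊤ : SimpleGraph V).edgeFinset := by
    ext e
    induction e using Sym2.ind with
    | _ x y =>
      simp only [Finset.mem_union, SimpleGraph.mem_edgeFinset, SimpleGraph.mem_edgeSet,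
        SimpleGraph.compl_adj, SimpleGraph.top_adj]
      constructor
      · rintro (h | h)
        · exact h.ne
        · exact h.1
      · intro h
        by_cases ha : G.Adj x y
        · exact Or.inl ha
        · exact Or.inr ⟨h, ha⟩
  have hsum : G.edgeFinset.card + Gᶜ.edgeFinset.card = Nat.choose n 2 := by
    rw [← hV, ← SimpleGraph.card_edgeFinset_top_eq_card_choose_two, ← hU,
      Finset.card_union_of_disjoint
        (SimpleGraph.disjoint_edgeFinset.2 disjoint_compl_right)]
  suffices h : Gᶜ.edgeFinset.card ≤ 1 by omega
  by_contra hcard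
  push_neg at hcard
  obtain ⟨e₁, he₁, e₂, he₂, hne⟩ := Finset.one_lt_card.1 hcard
  -- a key step: any two "missing edge" configurations give a contradiction
  have key1' : ∀ v x y : V, x ≠ v → y ≠ v → x ≠ y → ¬ G.Adj v x → ¬ G.Adj v y → False := by
    intro v x y hxv hyv hxy h1 h2
    have := key1 G v x y hxv hyv hxy h1 h2
    rw [hV] at this
    have := hdeg v
    omega
  have key2' : ∀ v x c d : V, x ≠ v → ¬ G.Adj v x → c ≠ d → G.Adj v c → G.Adj v d →
      ¬ G.Adj c d → False := by
    intro v x c d hxv h1 hcd hvc hvd hncd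
    have := key2 G v x c d hxv h1 hcd hvc hvd hncd
    rw [hV] at this
    have := hdeg v
    omega
  induction e₁ using Sym2.ind with
  | _ a b =>
  induction e₂ using Sym2.ind with
  | _ c d =>
  rw [SimpleGraph.mem_edgeFinset, SimpleGraph.mem_edgeSet, SimpleGraph.compl_adj] at he₁ he₂
  obtain ⟨hab, hnab⟩ := he₁
  obtain ⟨hcd, hncd⟩ := he₂
  by_cases hac : a = c
  · subst hac
    have hbd : b ≠ d := fun h => hne (by rw [h])
    exact key1' a b d (Ne.symm hab) (Ne.symm hcd) hbd hnab hncd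
  by_cases had : a = d
  · subst had
    have hbc : b ≠ c := fun h => hne (by rw [h, Sym2.eq_swap])
    exact key1' a b c (Ne.symm hab) hcd hbc hnab (fun h => hncd h.symm)
  by_cases hbc : b = c
  · subst hbc
    have hadne : a ≠ d := had
    exact key1' b a d hab (Ne.symm hcd) hadne (fun h => hnab h.symm) hncd
  by_cases hbd : b = d
  · subst hbd
    exact key1' b a c hab hcd hac (fun h => hnab h.symm)
      (fun h => hncd h.symm)
  -- all four distinct
  by_cases h1 : G.Adj a c
  · by_cases h2 : G.Adj a d
    · exact key2' a b c d (Ne.symm hab) hnab hcd h1 h2 hncd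
    · exact key1' a b d (Ne.symm hab) (Ne.symm had) hbd hnab h2
  · exact key1' a b c (Ne.symm hab) (Ne.symm hac) hbc hnab h1
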